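/- A composite number n ≥ 2 is a Giuga number if and only if there exists a positive integer K such that ∑_{j=1}^{n-1} j^{K·λ(n)} ≡ -1 (mod n). -/

import Mathlib

open Finset

/-- The Carmichael function: exponent of the unit group of `ZMod n`. -/
noncomputable def carmichael (n : ℕ) : ℕ := Monoid.exponent (ZMod n)ˣ

/-- `n` is composite. -/
def Composite (n : ℕ) : Prop := 2 ≤ n ∧ ¬ n.Prime

/-- `n` is a Giuga number. -/
def IsGiuga (n : ℕ) : Prop :=
  Composite n ∧ ∀ p : ℕ, p.Prime → p ∣ n → p ∣ (n / p - 1)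

lemma aux_sum_univ (p : ℕ) [hp : Fact p.Prime] {E : ℕ} (hE : 0 < E) (hd : (p - 1) ∣ E) :
    ∑ x : ZMod p, x ^ E = -1 := by
  obtain ⟨k, rfl⟩ := hd
  have h1 : ∀ x : ZMod p, x ≠ 0 → x ^ ((p - 1) * k) = 1 := fun x hx => by
    rw [pow_mul, ZMod.pow_card_sub_one_eq_one hx, one_pow]
  rw [← Finset.sum_erase_add _ _ (Finset.mem_univ (0 : ZMod p)),
    zero_pow hE.ne', add_zero,
    Finset.sum_congr rfl (fun x hx => h1 x (Finset.ne_of_mem_erase hx)),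
    Finset.sum_const, Finset.card_erase_of_mem (Finset.mem_univ _), Finset.card_univ,
    ZMod.card, nsmul_eq_mul, mul_one]
  have : ((p - 1 : ℕ) : ZMod p) = (p : ZMod p) - 1 := by
    push_cast [Nat.cast_sub hp.out.one_lt.le]; ring
  rw [this, ZMod.natCast_self, zero_sub]

lemma aux_sum_range_p (p : ℕ) [hp : Fact p.Prime] (E : ℕ) :
    ∑ j ∈ Finset.range p, (j : ZMod p) ^ E = ∑ x : ZMod p, x ^ E := by
  rw [← Fin.sum_univ_eq_sum_range (fun j => ((j : ℕ) : ZMod p) ^ E)]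
  apply Fintype.sum_bijective (fun j : Fin p => ((j : ℕ) : ZMod p))
  · rw [Fintype.bijective_iff_injective_and_card]
    constructor
    · intro a b hab
      have := congrArg ZMod.val hab
      rw [ZMod.val_cast_of_lt a.isLt, ZMod.val_cast_of_lt b.isLt] at this
      exact Fin.val_injective this
    · simp [ZMod.card]
  · intro j; rfl

lemma aux_sum_mul (p : ℕ) [hp : Fact p.Prime] (E m : ℕ) :
    ∑ j ∈ Finset.range (m * p), (j : ZMod p) ^ E
      = m • ∑ j ∈ Finset.range p, (j : ZMod p) ^ E := by
  induction m with
  | zero => simp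
  | succ m ih =>
    rw [Nat.succ_mul, Finset.sum_range_add, ih, succ_nsmul]
    congr 1
    apply Finset.sum_congr rfl
    intro j _
    push_cast
    rw [ZMod.natCast_self]
    ring_nf

/-- Key: value of the power sum mod a prime divisor `p` of `n`. -/
lemma aux_key (n p : ℕ) (hn : 0 < n) [hp : Fact p.Prime] (hpn : p ∣ n)
    {E : ℕ} (hE : 0 < E) (hd : (p - 1) ∣ E) :
    ((∑ j ∈ Finset.Ico 1 n, j ^ E : ℕ) : ZMod p) = -(n / p : ℕ) := by
  have h1 : ((∑ j ∈ Finset.Ico 1 n, j ^ E : ℕ) : ZMod p)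
      = ∑ j ∈ Finset.range n, (j : ZMod p) ^ E := by
    push_cast
    rw [Finset.range_eq_Ico, Finset.sum_eq_sum_Ico_succ_bot hn]
    simp [zero_pow hE.ne']
  rw [h1, ← Nat.div_mul_cancel hpn, aux_sum_mul, aux_sum_range_p, aux_sum_univ p hE hd,
    Nat.div_mul_cancel hpn]
  simp [nsmul_eq_mul]

theorem giuga_iff_exists_carmichael_powerSum (n : ℕ) (hn : Composite n) :
    IsGiuga n ↔ ∃ K : ℕ, 0 < K ∧
      ∑ j ∈ Finset.Ico 1 n, (j : ZMod n) ^ (K * carmichael n) = -1 := by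
  obtain ⟨hn2, hnp⟩ := hn
  have hn0 : 0 < n := by omega
  have : NeZero n := ⟨hn0.ne'⟩
  have hcar : 0 < carmichael n := Nat.pos_of_ne_zero Monoid.exponent_ne_zero_of_finite
  -- (p-1) divides carmichael n for prime p ∣ n
  have hdvd : ∀ p : ℕ, p.Prime → p ∣ n → (p - 1) ∣ carmichael n := by
    intro p pp hpn
    have : Fact p.Prime := ⟨pp⟩
    have h1 : Monoid.exponent (ZMod p)ˣ ∣ Monoid.exponent (ZMod n)ˣ :=
      MonoidHom.exponent_dvd (ZMod.unitsMap_surjective hpn)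
    have h2 : Monoid.exponent (ZMod p)ˣ = p - 1 := by
      rw [IsCyclic.exponent_eq_card, Nat.card_eq_fintype_card, ZMod.card_units_eq_totient,
        Nat.totient_prime pp]
    rwa [h2] at h1
  have cast_eq : ∀ E : ℕ, (∑ j ∈ Finset.Ico 1 n, (j : ZMod n) ^ E)
      = ((∑ j ∈ Finset.Ico 1 n, j ^ E : ℕ) : ZMod n) := by
    intro E; push_cast; rfl
  constructor
  · rintro ⟨-, hg⟩
    refine ⟨1, one_pos, ?_⟩
    set E := 1 * carmichael n with hEdef
    have hE : 0 < E := by simpa [hEdef] using hcar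
    have hsf : Squarefree n := by
      rw [Nat.squarefree_iff_prime_squarefree]
      intro p pp hpp
      have pp' : p.Prime := pp
      have hpn : p ∣ n := (dvd_mul_right p p).trans hpp
      have h1 : p ∣ n / p := by
        obtain ⟨c, rfl⟩ := hpp
        rw [mul_assoc, Nat.mul_div_cancel_left _ pp'.pos]
        exact dvd_mul_right p c
      have h2 := hg p pp' hpn
      have hd1 : p ∣ 1 := by
        have h1np : 1 ≤ n / p := (Nat.one_le_div_iff pp'.pos).mpr (Nat.le_of_dvd hn0 hpn)
        have := Nat.dvd_sub h1 h2
        rwa [Nat.sub_sub_self h1np] at this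
      exact absurd (Nat.eq_one_of_dvd_one hd1) pp'.one_lt.ne'
    rw [cast_eq]
    have hn_dvd : n ∣ (∑ j ∈ Finset.Ico 1 n, j ^ E) + 1 := by
      have hP : (∏ p ∈ n.primeFactors, p) ∣ (∑ j ∈ Finset.Ico 1 n, j ^ E) + 1 := by
        apply Finset.prod_primes_dvd
        · intro p hp; exact (Nat.prime_of_mem_primeFactors hp).prime
        · intro p hp
          have pp := Nat.prime_of_mem_primeFactors hp
          have hpn := Nat.dvd_of_mem_primeFactors hp
          have : Fact p.Prime := ⟨pp⟩
          have hdE : (p - 1) ∣ E := (hdvd p pp hpn).mul_left 1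
          have hmod := aux_key n p hn0 hpn hE hdE
          have h1np : 1 ≤ n / p := (Nat.one_le_div_iff pp.pos).mpr (Nat.le_of_dvd hn0 hpn)
          have hnp1 : ((n / p : ℕ) : ZMod p) = 1 := by
            have h2 := (ZMod.natCast_eq_zero_iff _ p).mpr (hg p pp hpn)
            rw [Nat.cast_sub h1np] at h2
            linear_combination h2
          rw [← ZMod.natCast_eq_zero_iff, Nat.cast_add, Nat.cast_one, hmod, hnp1]
          ring
      rwa [Nat.prod_primeFactors_of_squarefree hsf] at hP
    have hfin := (ZMod.natCast_eq_zero_iff _ n).mpr hn_dvd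
    rw [Nat.cast_add, Nat.cast_one] at hfin
    linear_combination hfin
  · rintro ⟨K, hK, hsum⟩
    refine ⟨⟨hn2, hnp⟩, ?_⟩
    intro p pp hpn
    have : Fact p.Prime := ⟨pp⟩
    set E := K * carmichael n with hEdef
    have hE : 0 < E := Nat.mul_pos hK hcar
    have hdE : (p - 1) ∣ E := (hdvd p pp hpn).mul_left K
    rw [cast_eq] at hsum
    have hn_dvd : n ∣ (∑ j ∈ Finset.Ico 1 n, j ^ E) + 1 := by
      rw [← ZMod.natCast_eq_zero_iff, Nat.cast_add, Nat.cast_one, hsum]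
      ring
    have hp_dvd : p ∣ (∑ j ∈ Finset.Ico 1 n, j ^ E) + 1 := dvd_trans hpn hn_dvd
    have hmodp : ((∑ j ∈ Finset.Ico 1 n, j ^ E : ℕ) : ZMod p) = -1 := by
      have h := (ZMod.natCast_eq_zero_iff _ p).mpr hp_dvd
      rw [Nat.cast_add, Nat.cast_one] at h
      linear_combination h
    rw [aux_key n p hn0 hpn hE hdE] at hmodp
    have hnp1 : ((n / p : ℕ) : ZMod p) = 1 := by linear_combination -hmodp
    have h1np : 1 ≤ n / p := Nat.one_le_div_iff pp.pos |>.mpr (Nat.le_of_dvd hn0 hpn)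
    rw [← ZMod.natCast_eq_zero_iff, Nat.cast_sub h1np, hnp1]
    ring
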